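/- If i and j are nodes in a DAG G such that there is no directed path from i to j and no directed path from j to i, and i,j are non-adjacent, then i and j are *-separated given pa(i). -/

import Mathlib

variable {V : Type*}

/-- Undirected adjacency in a digraph given by edge relation `E`. -/
def Adjd (E : V → V → Prop) (i j : V) : Prop := E i j ∨ E j i

/-- Parents of a node. -/
def pa (E : V → V → Prop) (j : V) : Set V := {u | E u j}

/-- A directed path from `i` to `j`, as a nonrepeating list of consecutive vertices. -/
def IsDirPath (E : V → V → Prop) (p : List V) (i j : V) : Prop :=
  p.Chain' E ∧ p.head? = some i ∧ p.getLast? = some j ∧ p.Nodup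

/-- An undirected path from `i` to `j`. -/
def IsUndirPath (E : V → V → Prop) (p : List V) (i j : V) : Prop :=
  p.Chain' (Adjd E) ∧ p.head? = some i ∧ p.getLast? = some j ∧ p.Nodup

/-- Interior (non-endpoint) vertices of a path. -/
def interiorL (p : List V) : List V := (p.drop 1).dropLast

/-- `k` is a collider on the path `p`: both path-edges at `k` point into `k`. -/
def IsColliderOn (E : V → V → Prop) (p : List V) (k : V) : Prop :=
  ∃ (l₁ l₂ : List V) (a b : V), p = l₁ ++ a :: k :: b :: l₂ ∧ E a k ∧ E b k

/-- A digraph is acyclic if it has no directed cycles. -/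
def Acyclic (E : V → V → Prop) : Prop := ∀ i, ¬ Relation.TransGen E i i

/-- `k ∈ An(K)`: `k` lies in `K` or is an ancestor of a member of `K`. -/
def InAn (E : V → V → Prop) (K : Set V) (k : V) : Prop :=
  k ∈ K ∨ ∃ m ∈ K, Relation.TransGen E k m

/-- The path `p` is d-connecting between `i` and `j` given `K`. -/
def DConnecting (E : V → V → Prop) (K : Set V) (p : List V) (i j : V) : Prop :=
  IsUndirPath E p i j ∧
  (∀ k, IsColliderOn E p k → InAn E K k) ∧
  (∀ k, k ∈ interiorL p → ¬ IsColliderOn E p k → k ∉ K)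

/-- d-separation of `i` and `j` given `K`. -/
def DSep (E : V → V → Prop) (K : Set V) (i j : V) : Prop :=
  ¬ ∃ p, DConnecting E K p i j

/-- The path `p` is *-connecting: d-connecting with at most one collider. -/
def StarConnecting (E : V → V → Prop) (K : Set V) (p : List V) (i j : V) : Prop :=
  DConnecting E K p i j ∧
  ∀ k₁ k₂, IsColliderOn E p k₁ → IsColliderOn E p k₂ → k₁ = k₂

/-- *-separation of `i` and `j` given `K`. -/
def StarSep (E : V → V → Prop) (K : Set V) (i j : V) : Prop :=
  ¬ ∃ p, StarConnecting E K p i j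

/-- The weight of a directed path: product of its edge weights. -/
def pathWeight (C : V → V → ℝ) (p : List V) : ℝ :=
  ((p.zip p.tail).map fun q => C q.1 q.2).prod

/-- A critical (maximum-weight) directed path from `i` to `j`. -/
def IsCritical (E : V → V → Prop) (C : V → V → ℝ) (p : List V) (i j : V) : Prop :=
  IsDirPath E p i j ∧ 2 ≤ p.length ∧
  ∀ q, IsDirPath E q i j → 2 ≤ q.length → pathWeight C q ≤ pathWeight C p

/-- Genericity of the weights: critical paths are unique when they exist. -/
def Generic (E : V → V → Prop) (C : V → V → ℝ) : Prop :=
  ∀ i j p q, IsCritical E C p i j → IsCritical E C q i j → p = q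

/-- Positivity of the edge weights. -/
def PosWeights (E : V → V → Prop) (C : V → V → ℝ) : Prop :=
  ∀ a b, E a b → 0 < C a b

/-- Edge of the weighted transitive reduction `G^tr_C`: the edge `i → j` is present in `G`
and every other directed `i`-`j` path has strictly smaller weight. -/
def TrEdge (E : V → V → Prop) (C : V → V → ℝ) (i j : V) : Prop :=
  E i j ∧ ∀ q, IsDirPath E q i j → 2 ≤ q.length → q ≠ [i, j] → pathWeight C q < C i j

/-- A path factors through `K` (relative to endpoints `i`,`j`). -/
def FactorsThrough (p : List V) (K : Set V) (i j : V) : Prop :=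
  ∃ k ∈ interiorL p, k ∈ K ∧ k ≠ i ∧ k ≠ j

/-- Edge of the critical DAG `G*_K(C)`. -/
def CritEdge (E : V → V → Prop) (C : V → V → ℝ) (K : Set V) (i j : V) : Prop :=
  (∃ p, IsDirPath E p i j ∧ 2 ≤ p.length) ∧
  ∀ p, IsCritical E C p i j → ¬ FactorsThrough p K i j

/-- `i` and `j` are C*-connected given `K`: one of the five types of connecting
paths exists in the critical DAG `G*_K(C)`. -/
def CStarConnected (E : V → V → Prop) (C : V → V → ℝ) (K : Set V) (i j : V) : Prop :=
  (CritEdge E C K i j ∨ CritEdge E C K j i) ∨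
  (∃ p, p ∉ K ∧ CritEdge E C K p i ∧ CritEdge E C K p j) ∨
  (∃ l ∈ K, CritEdge E C K i l ∧ CritEdge E C K j l) ∨
  (∃ p, ∃ l ∈ K, p ∉ K ∧ CritEdge E C K p i ∧ CritEdge E C K p l ∧ CritEdge E C K j l) ∨
  (∃ p, ∃ l ∈ K, p ∉ K ∧ CritEdge E C K p j ∧ CritEdge E C K p l ∧ CritEdge E C K i l) ∨
  (∃ p q, ∃ l ∈ K, p ∉ K ∧ q ∉ K ∧ CritEdge E C K p i ∧ CritEdge E C K p l ∧
    CritEdge E C K q l ∧ CritEdge E C K q j)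

/-- C*-separation of `i` and `j` given `K`. -/
def CStarSep (E : V → V → Prop) (C : V → V → ℝ) (K : Set V) (i j : V) : Prop :=
  ¬ CStarConnected E C K i j

/-- `b` immediately follows `a` in the cyclic order given by the list `p`. -/
def CycConsec (p : List V) (a b : V) : Prop :=
  ∃ t : Fin p.length, p.get t = a ∧
    p.get ⟨(t.val + 1) % p.length, Nat.mod_lt _ t.pos⟩ = b

/-- The list `p` enumerates, in cyclic order, an induced subgraph of the digraph `E`
which is (as an undirected graph) a simple cycle. -/
def IsInducedCycleList (E : V → V → Prop) (p : List V) : Prop :=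
  p.Nodup ∧ 3 ≤ p.length ∧
  ∀ a ∈ p, ∀ b ∈ p, (Adjd E a b ↔ (CycConsec p a b ∨ CycConsec p b a))

/-- `k` is a collider of the induced cycle `p`: both incident cycle edges point into `k`. -/
def CycCollider (E : V → V → Prop) (p : List V) (k : V) : Prop :=
  ∃ a b, a ≠ b ∧ CycConsec p a k ∧ CycConsec p k b ∧ E a k ∧ E b k

lemma aux_walk (E : V → V → Prop) (hA : Acyclic E) (i j : V)
    (hnij : ¬ Relation.TransGen E i j)
    (p : List V) (hch : p.Chain' (Adjd E)) (hlast : p.getLast? = some j)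
    (hcol : ∀ k, IsColliderOn E p k → InAn E (pa E i) k) :
    ∀ (l pre : List V) (a x : V), p = pre ++ a :: x :: l → E a x →
      Relation.TransGen E i x → False := by
  intro l
  induction l with
  | nil =>
    intro pre a x hp hax hix
    rw [hp] at hlast
    have hx : x = j := by
      have h2 : ([a, x] : List V).getLast? = some x := rfl
      rw [List.getLast?_append] at hlast
      simpa [h2] using hlast
    exact hnij (hx ▸ hix)
  | cons b l ih =>
    intro pre a x hp hax hix
    have hch' : List.Chain' (Adjd E) (a :: x :: b :: l) := by
      rw [hp] at hch
      exact (List.isChain_append.mp hch).2.1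
    have hadj : Adjd E x b := (List.isChain_cons_cons.mp ((List.isChain_cons_cons.mp hch').2)).1
    cases hadj with
    | inl hxb =>
      exact ih (pre ++ [a]) x b (by simpa [List.append_assoc] using hp) hxb (hix.tail hxb)
    | inr hbx =>
      have hc : IsColliderOn E p x := ⟨pre, l, a, b, hp, hax, hbx⟩
      rcases hcol x hc with hmem | ⟨m, hm, hxm⟩
      · exact hA i (hix.tail hmem)
      · exact hA i ((hix.trans hxm).tail hm)

/-- If `i` and `j` are nodes in a DAG such that there is no directed path
between them in either direction and they are non-adjacent, then `i` and `j` are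
*-separated given `pa i`. -/
theorem starsep_given_pa_of_no_dirpath
    (E : V → V → Prop) (hA : Acyclic E) (i j : V) (hij : i ≠ j)
    (hnij : ¬ Relation.TransGen E i j) (hnji : ¬ Relation.TransGen E j i)
    (hnadj : ¬ Adjd E i j) :
    StarSep E (pa E i) i j := by
  rintro ⟨p, ⟨⟨⟨hch, hhead, hlast, hnd⟩, hcol, hncol⟩, honecol⟩⟩
  cases p with
  | nil => simp at hhead
  | cons x rest =>
    have hx : i = x := by simpa using hhead.symm
    subst hx
    cases rest with
    | nil =>
      exact hij (by simpa using hlast)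
    | cons v rest' =>
      have hiv : Adjd E i v := (List.isChain_cons_cons.mp hch).1
      cases rest' with
      | nil =>
        have hv : v = j := by
          have : (i :: [v]).getLast? = some v := rfl
          rw [this] at hlast
          simpa using hlast
        subst hv; exact hnadj hiv
      | cons b rest'' =>
        cases hiv with
        | inl hiv =>
          exact aux_walk E hA i j hnij _ hch hlast hcol (b :: rest'') [] i v rfl hiv
            (Relation.TransGen.single hiv)
        | inr hvi =>
          by_cases hc : IsColliderOn E (i :: v :: b :: rest'') v
          · obtain ⟨l₁, l₂, a, b', hp, hav, hb'v⟩ := hc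
            have hEiv : E i v := by
              have hnd' : v ∉ b :: rest'' := by
                have := hnd
                simp only [List.nodup_cons] at this
                exact this.2.1
              cases l₁ with
              | nil =>
                obtain ⟨ha, -, -⟩ : i = a ∧ v = v ∧ b :: rest'' = b' :: l₂ := by
                  simpa using hp
                exact ha ▸ hav
              | cons w t =>
                exfalso
                obtain ⟨-, h2⟩ : i = w ∧ v :: b :: rest'' = t ++ a :: v :: b' :: l₂ := by
                  simpa using hp
                cases t with
                | nil =>
                  obtain ⟨ha, hb⟩ : v = a ∧ b :: rest'' = v :: b' :: l₂ := by simpa using h2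
                  exact hnd' (hb ▸ List.mem_cons_self)
                | cons u t' =>
                  obtain ⟨-, hb⟩ : v = u ∧ b :: rest'' = t' ++ a :: v :: b' :: l₂ := by
                    simpa using h2
                  refine hnd' (hb ▸ ?_)
                  simp
            exact hA i ((Relation.TransGen.single hEiv).tail hvi)
          · have hvmem : v ∈ interiorL (i :: v :: b :: rest'') := by
              simp [interiorL]
            exact hncol v hvmem hc hvi
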